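/- Let α ∈ [0,1] be a real number and let 𝒢 be a non-abelian group of order pq, where p < q are primes. Then for the power graph P(𝒢): (i) αp − 1 is an eigenvalue of A_α(P(𝒢)) whose eigenspace has dimension at least q(p−2); (ii) αq − 1 is an eigenvalue whose eigenspace has dimension at least q − 2; (iii) α + p − 2 is an eigenvalue whose eigenspace has dimension at least q − 1. -/

import Mathlib

open Matrix Polynomial BigOperators

/-- The generalized adjacency matrix `A_α(G) = α·D(G) + (1−α)·A(G)`. -/
noncomputable def Aalpha {V : Type*} [Fintype V] (G : SimpleGraph V) (α : ℝ) :
    Matrix V V ℝ :=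
  letI := Classical.decEq V
  letI := Classical.decRel G.Adj
  α • Matrix.diagonal (fun v => (G.degree v : ℝ)) + (1 - α) • G.adjMatrix ℝ

/-- `μ` is an eigenvalue of the real matrix `M`. -/
def Matrix.IsEigenvalue {n : Type*} [Fintype n] (M : Matrix n n ℝ) (μ : ℝ) : Prop :=
  ∃ v : n → ℝ, v ≠ 0 ∧ M.mulVec v = μ • v

/-- The dimension of the eigenspace of a real matrix `M` for the value `μ`. -/
noncomputable def eigMult {n : Type*} [Fintype n] (M : Matrix n n ℝ) (μ : ℝ) : ℕ :=
  letI := Classical.decEq n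
  Module.finrank ℝ (Module.End.eigenspace (Matrix.toLin' M) μ)

/-- The joined union `G[G_1, …, G_n]`. -/
def joinedUnion {n : ℕ} (G : SimpleGraph (Fin n)) (V : Fin n → Type*)
    (Gs : ∀ i, SimpleGraph (V i)) : SimpleGraph (Σ i, V i) :=
  SimpleGraph.fromRel (fun x y =>
    if h : x.1 = y.1 then (Gs y.1).Adj (h ▸ x.2) y.2 else G.Adj x.1 y.1)

/-- The join `G ∇ H` of two graphs. -/
def graphJoin {V W : Type*} (G : SimpleGraph V) (H : SimpleGraph W) :
    SimpleGraph (V ⊕ W) :=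
  SimpleGraph.fromRel (fun x y =>
    match x, y with
    | Sum.inl a, Sum.inl b => G.Adj a b
    | Sum.inr a, Sum.inr b => H.Adj a b
    | _, _ => True)

/-- The disjoint union `G ∪ H` of two graphs. -/
def disjUnion {V W : Type*} (G : SimpleGraph V) (H : SimpleGraph W) :
    SimpleGraph (V ⊕ W) :=
  SimpleGraph.fromRel (fun x y =>
    match x, y with
    | Sum.inl a, Sum.inl b => G.Adj a b
    | Sum.inr a, Sum.inr b => H.Adj a b
    | _, _ => False)

/-- Degree of a vertex (classical version). -/
noncomputable def gdegree {V : Type*} [Fintype V] (G : SimpleGraph V) (v : V) : ℕ :=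
  letI := Classical.decEq V
  letI := Classical.decRel G.Adj
  G.degree v

/-- The power graph of a group. -/
def powerGraph (G : Type*) [Group G] : SimpleGraph G :=
  SimpleGraph.fromRel (fun x y => ∃ k : ℕ, 0 < k ∧ y = x ^ k)

section Helpers

open Subgroup Finset

lemma eigMult_ge {n : Type*} [Fintype n] (M : Matrix n n ℝ) (μ : ℝ)
    {ι : Type*} [Fintype ι] (f : ι → n → ℝ)
    (hind : LinearIndependent ℝ f) (hmem : ∀ i, M.mulVec (f i) = μ • f i) :
    Fintype.card ι ≤ eigMult M μ := by
  letI := Classical.decEq n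
  have hfm : ∀ i, f i ∈ Module.End.eigenspace (Matrix.toLin' M) μ := fun i => by
    rw [Module.End.mem_eigenspace_iff, Matrix.toLin'_apply, hmem]
  have hg : LinearIndependent ℝ
      (fun i => (⟨f i, hfm i⟩ : Module.End.eigenspace (Matrix.toLin' M) μ)) := by
    apply LinearIndependent.of_comp (Module.End.eigenspace (Matrix.toLin' M) μ).subtype
    exact hind
  exact hg.fintype_card_le_finrank

lemma indicator_indep {V ι : Type*} [DecidableEq V]
    (C C0 : ι → Finset V) (x : ι → V)
    (hx : ∀ i, x i ∈ C i) (hij : ∀ i j, j ≠ i → x i ∉ C j)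
    (h0 : ∀ i j, x i ∉ C0 j) :
    LinearIndependent ℝ (fun i (w : V) =>
      (if w ∈ C i then (1:ℝ) else 0) - (if w ∈ C0 i then (1:ℝ) else 0)) := by
  rw [linearIndependent_iff']
  intro s g hsum i hi
  have h := congrFun hsum (x i)
  simp only [Finset.sum_apply, Pi.smul_apply, smul_eq_mul, Pi.zero_apply] at h
  rw [Finset.sum_eq_single i] at h
  · simpa [hx i, h0 i i] using h
  · intro j hj hji
    simp [hij i j hji, h0 i j]
  · intro hnot; exact absurd hi hnot

lemma Aalpha_eq {V : Type*} [Fintype V] [DecidableEq V] (G : SimpleGraph V)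
    [DecidableRel G.Adj] (α : ℝ) :
    Aalpha G α = α • Matrix.diagonal (fun v => (G.degree v : ℝ)) + (1 - α) • G.adjMatrix ℝ := by
  unfold Aalpha
  congr!

lemma sum_ind {V : Type*} [DecidableEq V] (s C : Finset V) :
    ∑ u ∈ s, (if u ∈ C then (1:ℝ) else 0) = ((s ∩ C).card : ℝ) := by
  rw [Finset.sum_ite_mem, Finset.sum_const, nsmul_eq_mul, mul_one]

lemma Aalpha_pair {V : Type*} [Fintype V] [DecidableEq V] (G : SimpleGraph V)
    [DecidableRel G.Adj] (α : ℝ) (C C' : Finset V) (d a b : ℕ)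
    (hCC' : ∀ z ∈ C, z ∉ C')
    (hC : ∀ z ∈ C, G.degree z = d ∧ (G.neighborFinset z ∩ C).card = a ∧
      (G.neighborFinset z ∩ C').card = b)
    (hC' : ∀ z ∈ C', G.degree z = d ∧ (G.neighborFinset z ∩ C').card = a ∧
      (G.neighborFinset z ∩ C).card = b)
    (hout : ∀ z, z ∉ C → z ∉ C' →
      (G.neighborFinset z ∩ C).card = (G.neighborFinset z ∩ C').card) :
    (Aalpha G α).mulVec
        (fun w => (if w ∈ C then (1:ℝ) else 0) - (if w ∈ C' then (1:ℝ) else 0))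
      = (α * d + (1-α) * ((a:ℝ) - (b:ℝ))) •
        (fun w => (if w ∈ C then (1:ℝ) else 0) - (if w ∈ C' then (1:ℝ) else 0)) := by
  rw [Aalpha_eq]
  funext z
  rw [Matrix.add_mulVec, Pi.add_apply, Matrix.smul_mulVec, Matrix.smul_mulVec,
    Pi.smul_apply, Pi.smul_apply, Matrix.mulVec_diagonal,
    SimpleGraph.adjMatrix_mulVec_apply, Finset.sum_sub_distrib, sum_ind, sum_ind,
    Pi.smul_apply, smul_eq_mul, smul_eq_mul, smul_eq_mul]
  by_cases hzC : z ∈ C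
  · obtain ⟨hd, ha, hb⟩ := hC z hzC
    simp only [hzC, hCC' z hzC, if_true, if_false, hd, ha, hb]
    ring
  · by_cases hzC' : z ∈ C'
    · obtain ⟨hd, ha, hb⟩ := hC' z hzC'
      simp only [hzC, hzC', if_true, if_false, hd, ha, hb]
      ring
    · rw [hout z hzC hzC']
      simp only [hzC, hzC', if_false]
      ring

lemma powerGraph_adj {G : Type*} [Group G] [Finite G] (x y : G) :
    (powerGraph G).Adj x y ↔ x ≠ y ∧ (y ∈ Subgroup.zpowers x ∨ x ∈ Subgroup.zpowers y) := by
  have key : ∀ a b : G, (∃ k : ℕ, 0 < k ∧ b = a ^ k) ↔ b ∈ Subgroup.zpowers a := by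
    intro a b
    constructor
    · rintro ⟨k, -, rfl⟩
      exact Subgroup.mem_zpowers_iff.mpr ⟨(k : ℤ), (zpow_natCast a k)⟩
    · intro hb
      obtain ⟨k, hk⟩ := mem_powers_iff_mem_zpowers.mpr hb
      rcases Nat.eq_zero_or_pos k with rfl | hk0
      · exact ⟨orderOf a, orderOf_pos a, by rw [pow_orderOf_eq_one]; exact (by simpa using hk.symm)⟩
      · exact ⟨k, hk0, hk.symm⟩
  show (SimpleGraph.fromRel _).Adj x y ↔ _
  rw [SimpleGraph.fromRel_adj, key, key]

lemma dvd_pq {p q d : ℕ} (hp : p.Prime) (hq : q.Prime) (hpq : p ≠ q) (hd : d ∣ p * q) :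
    d = 1 ∨ d = p ∨ d = q ∨ d = p * q := by
  by_cases hpd : p ∣ d
  · obtain ⟨e, rfl⟩ := hpd
    have he : e ∣ q := (Nat.mul_dvd_mul_iff_left hp.pos).mp hd
    rcases hq.eq_one_or_self_of_dvd e he with h | h
    · subst h; right; left; simp
    · subst h; right; right; right; rfl
  · have hco : Nat.Coprime d p := (hp.coprime_iff_not_dvd.mpr hpd).symm
    have hdq : d ∣ q := hco.dvd_of_dvd_mul_left hd
    rcases hq.eq_one_or_self_of_dvd d hdq with h | h
    · left; exact h
    · right; right; left; exact h

end Helpers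

open Subgroup Finset in
/-- eigenvalues of the power graph of a non-abelian group of order
`pq`, `p < q` primes. -/
theorem stmt_17 {α : ℝ} (hα : α ∈ Set.Icc (0 : ℝ) 1)
    (p q : ℕ) (hp : p.Prime) (hq : q.Prime) (hpq : p < q)
    (G : Type) [Group G] [Fintype G] (hcard : Fintype.card G = p * q)
    (hna : ∃ a b : G, a * b ≠ b * a) :
    q * (p - 2) ≤ eigMult (Aalpha (powerGraph G) α) (α * (p : ℝ) - 1) ∧
    q - 2 ≤ eigMult (Aalpha (powerGraph G) α) (α * (q : ℝ) - 1) ∧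
    q - 1 ≤ eigMult (Aalpha (powerGraph G) α) (α + (p : ℝ) - 2) := by
  classical
  have hq2 : 2 ≤ q := hq.two_le
  obtain ⟨m, rfl⟩ : ∃ m, p = m + 2 := ⟨p - 2, by have := hp.two_le; omega⟩
  set p := m + 2 with hpdef
  have hpne : p ≠ q := Nat.ne_of_lt hpq
  -- order of every element is 1, p, or q
  have horder : ∀ x : G, orderOf x = 1 ∨ orderOf x = p ∨ orderOf x = q := by
    intro x
    have hd : orderOf x ∣ p * q := by rw [← hcard]; exact orderOf_dvd_card
    rcases dvd_pq hp hq hpne hd with h | h | h | h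
    · exact Or.inl h
    · exact Or.inr (Or.inl h)
    · exact Or.inr (Or.inr h)
    · exfalso
      have : IsCyclic G := isCyclic_of_orderOf_eq_card x
        (by rw [Nat.card_eq_fintype_card, hcard, h])
      letI : CommGroup G := IsCyclic.commGroup
      obtain ⟨a, b, hab⟩ := hna
      exact hab (mul_comm a b)
  -- generated subgroups
  have hzeq : ∀ {x y : G}, x ≠ 1 → x ∈ zpowers y → zpowers x = zpowers y := by
    intro x y hx hxy
    have hle : zpowers x ≤ zpowers y := zpowers_le.mpr hxy
    have hdvd : orderOf x ∣ orderOf y := orderOf_dvd_of_mem_zpowers hxy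
    have hx1 : orderOf x ≠ 1 := by simpa [orderOf_eq_one_iff] using hx
    have hord : orderOf x = orderOf y := by
      rcases horder x with h | h | h
      · exact absurd h hx1
      all_goals rcases horder y with h' | h' | h' <;> rw [h, h'] at hdvd ⊢
      · exact absurd (Nat.dvd_one.mp hdvd) hp.ne_one
      · exact absurd ((Nat.prime_dvd_prime_iff_eq hp hq).mp hdvd) hpne
      · exact absurd (Nat.dvd_one.mp hdvd) hq.ne_one
      · exact absurd ((Nat.prime_dvd_prime_iff_eq hq hp).mp hdvd) (Ne.symm hpne)
    exact Subgroup.eq_of_le_of_card_ge hle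
      (le_of_eq (by rw [Nat.card_zpowers, Nat.card_zpowers, hord]))
  have hordeq : ∀ {x y : G}, zpowers x = zpowers y → orderOf x = orderOf y := by
    intro x y h
    rw [← Nat.card_zpowers, h, Nat.card_zpowers]
  -- adjacency in the power graph
  have hadj : ∀ x z : G, x ≠ 1 → ((powerGraph G).Adj x z ↔ z ∈ zpowers x ∧ z ≠ x) := by
    intro x z hx
    rw [powerGraph_adj]
    constructor
    · rintro ⟨hne, h | h⟩
      · exact ⟨h, fun hzx => hne hzx.symm⟩
      · have h2 := hzeq hx h
        exact ⟨h2 ▸ Subgroup.mem_zpowers z, fun hzx => hne hzx.symm⟩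
    · rintro ⟨hz, hne⟩
      exact ⟨fun hxz => hne hxz.symm, Or.inl hz⟩
  -- neighborhoods
  have hNB : ∀ x : G, x ≠ 1 →
      (powerGraph G).neighborFinset x = ((zpowers x : Set G)).toFinset.erase x := by
    intro x hx
    ext z
    simp only [SimpleGraph.mem_neighborFinset, hadj x z hx, Finset.mem_erase,
      Set.mem_toFinset, SetLike.mem_coe]
    tauto
  have hdeg : ∀ x : G, x ≠ 1 → (powerGraph G).degree x = orderOf x - 1 := by
    intro x hx
    rw [show (powerGraph G).degree x = ((powerGraph G).neighborFinset x).card from rfl,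
      hNB x hx, Finset.card_erase_of_mem (by simp [Set.mem_toFinset, Subgroup.mem_zpowers]),
      Set.toFinset_card]
    simp [Fintype.card_zpowers]
  -- membership lemma for pairs of "twin" vertices
  have hsingle : ∀ x y : G, x ≠ 1 → y ≠ 1 → x ≠ y → zpowers x = zpowers y →
      (Aalpha (powerGraph G) α).mulVec
        (fun w => (if w ∈ ({x} : Finset G) then (1:ℝ) else 0) -
          (if w ∈ ({y} : Finset G) then (1:ℝ) else 0))
      = (α * (orderOf x : ℝ) - 1) •
        (fun w => (if w ∈ ({x} : Finset G) then (1:ℝ) else 0) -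
          (if w ∈ ({y} : Finset G) then (1:ℝ) else 0)) := by
    intro x y hx hy hxy hzp
    have hoy : orderOf y = orderOf x := hordeq hzp.symm
    have hone : 1 ≤ orderOf x := orderOf_pos x
    have hcs : ∀ (s : Finset G) (a : G), (s ∩ {a}).card = if a ∈ s then 1 else 0 := by
      intro s a
      by_cases h : a ∈ s
      · rw [Finset.inter_comm, Finset.singleton_inter_of_mem h]; simp [h]
      · rw [Finset.inter_comm, Finset.singleton_inter_of_notMem h]; simp [h]
    have hres := Aalpha_pair (powerGraph G) α {x} {y} (orderOf x - 1) 0 1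
      (by intro z hz; simp at hz; simp [hz, hxy])
      (by
        intro z hz
        simp only [Finset.mem_singleton] at hz
        subst hz
        refine ⟨hdeg z hx, ?_, ?_⟩
        · rw [hcs]; simp [hNB z hx]
        · rw [hcs]; simp only [hNB z hx, Finset.mem_erase, Set.mem_toFinset, SetLike.mem_coe]
          simp [hxy.symm, hzp ▸ Subgroup.mem_zpowers y])
      (by
        intro z hz
        simp only [Finset.mem_singleton] at hz
        subst hz
        refine ⟨by rw [hdeg z hy, hoy], ?_, ?_⟩
        · rw [hcs]; simp [hNB z hy]
        · rw [hcs]; simp only [hNB z hy, Finset.mem_erase, Set.mem_toFinset, SetLike.mem_coe]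
          simp [hxy, hzp ▸ Subgroup.mem_zpowers x])
      (by
        intro z hzx hzy
        simp only [Finset.mem_singleton] at hzx hzy
        rw [hcs, hcs]
        have h1 : x ∈ (powerGraph G).neighborFinset z ↔ z ∈ zpowers x := by
          rw [SimpleGraph.mem_neighborFinset, SimpleGraph.adj_comm, hadj x z hx]
          simp [hzx]
        have h2 : y ∈ (powerGraph G).neighborFinset z ↔ z ∈ zpowers x := by
          rw [SimpleGraph.mem_neighborFinset, SimpleGraph.adj_comm, hadj y z hy, hzp]
          simp [hzy]
        rw [if_congr (h1.trans h2.symm) rfl rfl])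
    rw [hres]
    congr 1
    rw [Nat.cast_sub hone]
    push_cast
    ring
  -- a generator of q-part
  haveI : Fact q.Prime := ⟨hq⟩
  obtain ⟨x0, hx0⟩ := exists_prime_orderOf_dvd_card q (by rw [hcard]; exact dvd_mul_left q p)
  have hx0ne : x0 ≠ 1 := by
    intro h; rw [h, orderOf_one] at hx0; omega
  -- uniqueness of the subgroup of order q
  have hqu : ∀ x : G, orderOf x = q → zpowers x = zpowers x0 := by
    intro x hx
    by_contra hne
    have htriv : ∀ z : G, z ∈ zpowers x → z ∈ zpowers x0 → z = 1 := by
      intro z h1 h2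
      by_contra hz
      exact hne ((hzeq hz h1).symm.trans (hzeq hz h2))
    have hinj : Function.Injective
        (fun ab : (zpowers x) × (zpowers x0) => (ab.1 : G) * ab.2) := by
      rintro ⟨a, b⟩ ⟨a', b'⟩ hab
      simp only at hab
      have h2 : (a' : G)⁻¹ * a = (b' : G) * (b : G)⁻¹ := by
        calc (a' : G)⁻¹ * a = (a':G)⁻¹ * ((a:G) * b) * (b:G)⁻¹ := by group
        _ = (a':G)⁻¹ * ((a':G) * b') * (b:G)⁻¹ := by rw [hab]
        _ = (b':G) * (b:G)⁻¹ := by group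
      have hm1 : (a' : G)⁻¹ * a ∈ zpowers x := mul_mem (inv_mem a'.2) a.2
      have hm2 : (a' : G)⁻¹ * a ∈ zpowers x0 := h2 ▸ mul_mem b'.2 (inv_mem b.2)
      have h1 : (a' : G)⁻¹ * (a : G) = 1 := htriv _ hm1 hm2
      have ha : (a : G) = a' := by
        have := inv_mul_eq_one.mp h1; exact this.symm
      have hb : (b : G) = b' := by
        apply mul_left_cancel (a := (a : G))
        rw [hab, ha]
      exact Prod.ext (Subtype.ext ha) (Subtype.ext hb)
    have hle := Fintype.card_le_of_injective _ hinj
    rw [Fintype.card_prod, Fintype.card_zpowers, Fintype.card_zpowers, hx, hx0, hcard] at hle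
    have : p * q < q * q := by
      exact Nat.mul_lt_mul_of_lt_of_le hpq (le_refl q) (by omega)
    omega
  -- counting
  set SqF : Finset G := Finset.univ.filter (fun x => orderOf x = q) with hSqF
  have hSq_eq : SqF = ((zpowers x0 : Set G)).toFinset.erase 1 := by
    ext z
    simp only [hSqF, Finset.mem_filter, Finset.mem_univ, true_and, Finset.mem_erase,
      Set.mem_toFinset, SetLike.mem_coe]
    constructor
    · intro hz
      have h := hqu z hz
      refine ⟨by intro h1; rw [h1, orderOf_one] at hz; omega, h ▸ Subgroup.mem_zpowers z⟩
    · rintro ⟨hz1, hz⟩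
      have h := hzeq hz1 hz
      rw [← Nat.card_zpowers, h, Nat.card_zpowers, hx0]
  have hcard_zx0 : ((zpowers x0 : Set G)).toFinset.card = q := by
    rw [Set.toFinset_card]
    simp [Fintype.card_zpowers, hx0]
  have hSq_card : SqF.card + 1 = q := by
    rw [hSq_eq, Finset.card_erase_of_mem (Set.mem_toFinset.mpr (Subgroup.one_mem _)), hcard_zx0]
    omega
  set SpF : Finset G := Finset.univ.filter (fun x => orderOf x = p) with hSpF
  have hSp_card : SpF.card + q = p * q := by
    have hUs : (Finset.univ : Finset G) = {(1:G)} ∪ (SpF ∪ SqF) := by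
      ext x
      simp only [Finset.mem_univ, true_iff, Finset.mem_union, Finset.mem_singleton,
        hSpF, hSqF, Finset.mem_filter, Finset.mem_univ, true_and]
      rcases horder x with h | h | h
      · exact Or.inl (orderOf_eq_one_iff.mp h)
      · exact Or.inr (Or.inl h)
      · exact Or.inr (Or.inr h)
    have hd1 : Disjoint ({(1:G)} : Finset G) (SpF ∪ SqF) := by
      simp only [Finset.disjoint_left, Finset.mem_singleton]
      rintro x rfl hx
      simp only [Finset.mem_union, hSpF, hSqF, Finset.mem_filter, Finset.mem_univ, true_and,
        orderOf_one] at hx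
      rcases hx with h | h
      · omega
      · omega
    have hd2 : Disjoint SpF SqF := by
      simp only [Finset.disjoint_left, hSpF, hSqF, Finset.mem_filter, Finset.mem_univ, true_and]
      intro x h1 h2
      rw [h1] at h2
      exact hpne h2
    have := Finset.card_univ (α := G)
    rw [hUs, Finset.card_union_of_disjoint hd1, Finset.card_union_of_disjoint hd2,
      hcard] at this
    simp only [Finset.card_singleton] at this
    omega
  -- the order-p subgroups
  set T : Finset (Subgroup G) := SpF.image (fun x => zpowers x) with hT
  set rep : Subgroup G → G :=
    fun H => if h : ∃ y : G, orderOf y = p ∧ zpowers y = H then h.choose else 1 with hrepdef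
  have hrepT : ∀ H ∈ T, orderOf (rep H) = p ∧ zpowers (rep H) = H := by
    intro H hH
    rw [hT, Finset.mem_image] at hH
    obtain ⟨y, hy1, hy2⟩ := hH
    rw [hSpF, Finset.mem_filter] at hy1
    have hex : ∃ y : G, orderOf y = p ∧ zpowers y = H := ⟨y, hy1.2, hy2⟩
    rw [hrepdef]
    simp only [dif_pos hex]
    exact hex.choose_spec
  have hmemH : ∀ H ∈ T, ∀ z : G, z ∈ H → z ≠ 1 → orderOf z = p ∧ zpowers z = H := by
    intro H hH z hz hz1
    obtain ⟨hor, hzp⟩ := hrepT H hH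
    have h := hzeq hz1 (show z ∈ zpowers (rep H) by rw [hzp]; exact hz)
    exact ⟨by rw [hordeq h, hor], h.trans hzp⟩
  have hdisjT : ∀ H ∈ T, ∀ K ∈ T, H ≠ K → ∀ z : G, z ∈ H → z ∈ K → z = 1 := by
    intro H hH K hK hne z hzH hzK
    by_contra hz
    exact hne (((hmemH H hH z hzH hz).2).symm.trans ((hmemH K hK z hzK hz).2))
  have hcardH : ∀ H ∈ T, (((H : Set G)).toFinset.erase 1).card = p - 1 := by
    intro H hH
    obtain ⟨hor, hzp⟩ := hrepT H hH
    rw [Finset.card_erase_of_mem (Set.mem_toFinset.mpr (Subgroup.one_mem _)), Set.toFinset_card]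
    rw [← hzp]
    simp [Fintype.card_zpowers, hor]
  have hSp_eq : SpF = T.biUnion (fun H => ((H : Set G)).toFinset.erase 1) := by
    ext z
    simp only [hSpF, Finset.mem_filter, Finset.mem_univ, true_and, Finset.mem_biUnion,
      Finset.mem_erase, Set.mem_toFinset, SetLike.mem_coe]
    constructor
    · intro hz
      refine ⟨zpowers z, ?_, ?_, Subgroup.mem_zpowers z⟩
      · rw [hT, Finset.mem_image]
        exact ⟨z, by rw [hSpF, Finset.mem_filter]; exact ⟨Finset.mem_univ z, hz⟩, rfl⟩
      · intro h1; rw [h1, orderOf_one] at hz; omega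
    · rintro ⟨H, hH, hz1, hz⟩
      exact (hmemH H hH z hz hz1).1
  have hT_card : T.card = q := by
    have hdisj : ∀ H ∈ T, ∀ K ∈ T, H ≠ K →
        Disjoint (((H : Set G)).toFinset.erase 1) (((K : Set G)).toFinset.erase 1) := by
      intro H hH K hK hne
      simp only [Finset.disjoint_left, Finset.mem_erase, Set.mem_toFinset, SetLike.mem_coe]
      rintro z ⟨hz1, hzH⟩ ⟨_, hzK⟩
      exact hz1 (hdisjT H hH K hK hne z hzH hzK)
    have h : SpF.card = ∑ H ∈ T, (((H : Set G)).toFinset.erase 1).card := by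
      rw [hSp_eq]; exact Finset.card_biUnion hdisj
    have h2 : ∑ H ∈ T, (((H : Set G)).toFinset.erase 1).card = T.card * (m + 1) := by
      have hp1 : p - 1 = m + 1 := by omega
      rw [Finset.sum_congr rfl (fun H hH => hcardH H hH), Finset.sum_const, smul_eq_mul, hp1]
    have h3 : SpF.card = q * (m + 1) := by
      have h4 : p * q = q * (m+1) + q := by rw [hpdef]; ring
      omega
    have h5 : T.card * (m+1) = q * (m+1) := (h2.symm.trans h.symm).trans h3
    exact Nat.eq_of_mul_eq_mul_right (Nat.succ_pos m) h5
  -- fixed points of rep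
  set FixF : Finset G := SpF.filter (fun x => rep (zpowers x) = x) with hFixF
  set IF : Finset G := SpF.filter (fun x => rep (zpowers x) ≠ x) with hIF
  have hzpT : ∀ x ∈ SpF, zpowers x ∈ T := by
    intro x hx
    rw [hT, Finset.mem_image]
    exact ⟨x, hx, rfl⟩
  have hFix_card : FixF.card = q := by
    rw [← hT_card]
    apply Finset.card_bij (fun x _ => zpowers x)
    · intro a ha
      rw [hFixF, Finset.mem_filter] at ha
      exact hzpT a ha.1
    · intro a ha b hb hab
      rw [hFixF, Finset.mem_filter] at ha hb
      rw [← ha.2, ← hb.2, hab]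
    · intro H hH
      obtain ⟨hor, hzp⟩ := hrepT H hH
      refine ⟨rep H, ?_, hzp⟩
      rw [hFixF, Finset.mem_filter, hSpF, Finset.mem_filter]
      exact ⟨⟨Finset.mem_univ _, hor⟩, by rw [hzp]⟩
  have hIF_card : IF.card = q * m := by
    have hsplit : FixF.card + IF.card = SpF.card := by
      have h := Finset.card_filter_add_card_filter_not
        (s := SpF) (p := fun x => rep (zpowers x) = x)
      simpa [hFixF, hIF] using h
    have h3 : SpF.card = q * (m + 1) := by
      have h4 : p * q = q * (m+1) + q := by rw [hpdef]; ring
      omega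
    have hqm : q * (m+1) = q * m + q := by ring
    omega
  -- properties of elements of order p or q
  have hordp_ne1 : ∀ x : G, orderOf x = p → x ≠ 1 := by
    intro x hx h1; rw [h1, orderOf_one] at hx; omega
  have hordq_ne1 : ∀ x : G, orderOf x = q → x ≠ 1 := by
    intro x hx h1; rw [h1, orderOf_one] at hx; omega
  -- the clique membership lemma for part (iii)
  have hclique : ∀ H ∈ T, ∀ K ∈ T, H ≠ K →
      (Aalpha (powerGraph G) α).mulVec
        (fun w => (if w ∈ ((H : Set G)).toFinset.erase 1 then (1:ℝ) else 0) -
          (if w ∈ ((K : Set G)).toFinset.erase 1 then (1:ℝ) else 0))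
      = (α + (p : ℝ) - 2) •
        (fun w => (if w ∈ ((H : Set G)).toFinset.erase 1 then (1:ℝ) else 0) -
          (if w ∈ ((K : Set G)).toFinset.erase 1 then (1:ℝ) else 0)) := by
    intro H hH K hK hne
    have haux : ∀ L ∈ T, ∀ z ∈ ((L : Set G)).toFinset.erase 1,
        (powerGraph G).degree z = m + 1 ∧
        ((powerGraph G).neighborFinset z ∩ ((L : Set G)).toFinset.erase 1).card = m := by
      intro L hL z hz
      rw [Finset.mem_erase, Set.mem_toFinset, SetLike.mem_coe] at hz
      obtain ⟨hz1, hzL⟩ := hz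
      obtain ⟨hzo, hzzp⟩ := hmemH L hL z hzL hz1
      constructor
      · rw [hdeg z hz1, hzo]; omega
      · have hinter : (powerGraph G).neighborFinset z ∩ ((L : Set G)).toFinset.erase 1 =
            (((L : Set G)).toFinset.erase 1).erase z := by
          rw [hNB z hz1, hzzp]
          ext u
          simp only [Finset.mem_inter, Finset.mem_erase, Set.mem_toFinset, SetLike.mem_coe]
          tauto
        rw [hinter, Finset.card_erase_of_mem (by
          rw [Finset.mem_erase, Set.mem_toFinset]; exact ⟨hz1, hzL⟩), hcardH L hL]
        omega
    have hcross : ∀ L ∈ T, ∀ L' ∈ T, L ≠ L' → ∀ z ∈ ((L : Set G)).toFinset.erase 1,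
        ((powerGraph G).neighborFinset z ∩ ((L' : Set G)).toFinset.erase 1) = ∅ := by
      intro L hL L' hL' hLL' z hz
      rw [Finset.mem_erase, Set.mem_toFinset, SetLike.mem_coe] at hz
      obtain ⟨hz1, hzL⟩ := hz
      obtain ⟨hzo, hzzp⟩ := hmemH L hL z hzL hz1
      rw [Finset.eq_empty_iff_forall_notMem]
      intro u hu
      rw [hNB z hz1, Finset.mem_inter, Finset.mem_erase, Finset.mem_erase,
        Set.mem_toFinset, Set.mem_toFinset, SetLike.mem_coe, SetLike.mem_coe] at hu
      obtain ⟨⟨huz, huzp⟩, hu1, huL'⟩ := hu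
      have h1 := hzeq hu1 huzp
      have h2 := (hmemH L' hL' u huL' hu1).2
      exact hLL' (by rw [← hzzp, ← h1, h2])
    have hres := Aalpha_pair (powerGraph G) α
      (((H : Set G)).toFinset.erase 1) (((K : Set G)).toFinset.erase 1) (m+1) m 0
      (by
        intro z hz hz'
        rw [Finset.mem_erase, Set.mem_toFinset, SetLike.mem_coe] at hz hz'
        exact hz.1 (hdisjT H hH K hK hne z hz.2 hz'.2))
      (by
        intro z hz
        obtain ⟨h1, h2⟩ := haux H hH z hz
        exact ⟨h1, h2, by rw [hcross H hH K hK hne z hz]; simp⟩)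
      (by
        intro z hz
        obtain ⟨h1, h2⟩ := haux K hK z hz
        exact ⟨h1, h2, by rw [hcross K hK H hH (Ne.symm hne) z hz]; simp⟩)
      (by
        intro z hzH hzK
        by_cases hz1 : z = 1
        · subst hz1
          have hsub : ∀ L ∈ T, (powerGraph G).neighborFinset 1 ∩ ((L : Set G)).toFinset.erase 1
              = ((L : Set G)).toFinset.erase 1 := by
            intro L hL
            apply Finset.inter_eq_right.mpr
            intro u hu
            rw [Finset.mem_erase, Set.mem_toFinset, SetLike.mem_coe] at hu
            rw [SimpleGraph.mem_neighborFinset, SimpleGraph.adj_comm, hadj u 1 hu.1]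
            exact ⟨Subgroup.one_mem _, Ne.symm hu.1⟩
          rw [hsub H hH, hsub K hK, hcardH H hH, hcardH K hK]
        · have hnotin : ∀ L ∈ T, z ∉ ((L : Set G)).toFinset.erase 1 → z ∉ (L : Subgroup G) := by
            intro L hL hzL hzmem
            exact hzL (by rw [Finset.mem_erase, Set.mem_toFinset]; exact ⟨hz1, hzmem⟩)
          have hempty : ∀ L ∈ T, z ∉ (L : Subgroup G) →
              ((powerGraph G).neighborFinset z ∩ ((L : Set G)).toFinset.erase 1) = ∅ := by
            intro L hL hzL
            rw [Finset.eq_empty_iff_forall_notMem]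
            intro u hu
            rw [hNB z hz1, Finset.mem_inter, Finset.mem_erase, Finset.mem_erase,
              Set.mem_toFinset, Set.mem_toFinset, SetLike.mem_coe, SetLike.mem_coe] at hu
            obtain ⟨⟨huz, huzp⟩, hu1, huL⟩ := hu
            have h1 := hzeq hu1 huzp
            have h2 := (hmemH L hL u huL hu1).2
            apply hzL
            rw [← h2, h1]
            exact Subgroup.mem_zpowers z
          rw [hempty H hH (hnotin H hH hzH), hempty K hK (hnotin K hK hzK)])
    rw [hres]
    congr 1
    rw [hpdef]
    push_cast
    ring
  -- assemble the three parts
  refine ⟨?_, ?_, ?_⟩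
  -- part (i)
  · have hcount : Fintype.card ↥IF = q * (p - 2) := by
      show Fintype.card ↥IF = q * m
      rw [Fintype.card_coe, hIF_card]
    rw [← hcount]
    apply eigMult_ge _ _ (fun (i : ↥IF) (w : G) =>
      (if w ∈ ({(i : G)} : Finset G) then (1:ℝ) else 0) -
      (if w ∈ ({rep (zpowers (i : G))} : Finset G) then (1:ℝ) else 0))
    · have hfix : ∀ i : ↥IF, rep (zpowers (rep (zpowers (i : G)))) = rep (zpowers (i : G)) := by
        intro i
        have hi := Finset.mem_filter.mp i.2
        rw [(hrepT _ (hzpT _ hi.1)).2]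
      apply indicator_indep _ _ (fun i : ↥IF => (i : G))
      · intro i; simp
      · intro i j hji
        simp only [Finset.mem_singleton]
        exact fun h => hji (Subtype.ext h.symm)
      · intro i j
        simp only [Finset.mem_singleton]
        intro h
        have hi := Finset.mem_filter.mp i.2
        apply hi.2
        calc rep (zpowers (i:G)) = rep (zpowers (rep (zpowers (j:G)))) := by rw [← h]
        _ = rep (zpowers (j:G)) := hfix j
        _ = (i : G) := h.symm
    · intro i
      have hi := Finset.mem_filter.mp i.2
      have hio : orderOf (i : G) = p := (Finset.mem_filter.mp hi.1).2
      obtain ⟨hro, hrzp⟩ := hrepT _ (hzpT _ hi.1)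
      have h := hsingle (i : G) (rep (zpowers (i : G))) (hordp_ne1 _ hio) (hordp_ne1 _ hro)
        (Ne.symm hi.2) hrzp.symm
      rw [hio] at h
      exact h
  -- part (ii)
  · have hcount : Fintype.card ↥(SqF.erase x0) = q - 2 := by
      rw [Fintype.card_coe, Finset.card_erase_of_mem (by
        rw [hSqF, Finset.mem_filter]; exact ⟨Finset.mem_univ _, hx0⟩)]
      omega
    rw [← hcount]
    apply eigMult_ge _ _ (fun (i : ↥(SqF.erase x0)) (w : G) =>
      (if w ∈ ({(i : G)} : Finset G) then (1:ℝ) else 0) -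
      (if w ∈ ({x0} : Finset G) then (1:ℝ) else 0))
    · apply indicator_indep _ _ (fun i : ↥(SqF.erase x0) => (i : G))
      · intro i; simp
      · intro i j hji
        simp only [Finset.mem_singleton]
        exact fun h => hji (Subtype.ext h.symm)
      · intro i j
        simp only [Finset.mem_singleton]
        exact (Finset.mem_erase.mp i.2).1
    · intro i
      have hi := Finset.mem_erase.mp i.2
      have hio : orderOf (i : G) = q := (Finset.mem_filter.mp hi.2).2
      have h := hsingle (i : G) x0 (hordq_ne1 _ hio) hx0ne hi.1 (hqu _ hio)
      rw [hio] at h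
      exact h
  -- part (iii)
  · have hTne : T.Nonempty := by
      rw [← Finset.card_pos, hT_card]; omega
    obtain ⟨H0, hH0⟩ := hTne
    have hcount : Fintype.card ↥(T.erase H0) = q - 1 := by
      rw [Fintype.card_coe, Finset.card_erase_of_mem hH0, hT_card]
    rw [← hcount]
    apply eigMult_ge _ _ (fun (i : ↥(T.erase H0)) (w : G) =>
      (if w ∈ (((i : Subgroup G) : Set G)).toFinset.erase 1 then (1:ℝ) else 0) -
      (if w ∈ ((H0 : Set G)).toFinset.erase 1 then (1:ℝ) else 0))
    · have hmemT' : ∀ i : ↥(T.erase H0), (i : Subgroup G) ∈ T := by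
        intro i
        have := i.2
        rw [Finset.mem_erase] at this
        exact this.2
      have hneH0 : ∀ i : ↥(T.erase H0), (i : Subgroup G) ≠ H0 := by
        intro i
        have := i.2
        rw [Finset.mem_erase] at this
        exact this.1
      have hrepmem : ∀ H ∈ T, rep H ∈ H := fun H hH =>
        Subgroup.zpowers_le.mp (le_of_eq (hrepT H hH).2)
      apply indicator_indep _ _ (fun i : ↥(T.erase H0) => rep (i : Subgroup G))
      · intro i
        rw [Finset.mem_erase, Set.mem_toFinset, SetLike.mem_coe]
        exact ⟨hordp_ne1 _ (hrepT _ (hmemT' i)).1, hrepmem _ (hmemT' i)⟩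
      · intro i j hji
        rw [Finset.mem_erase, Set.mem_toFinset, SetLike.mem_coe]
        rintro ⟨h1, h2⟩
        have hne : (j : Subgroup G) ≠ (i : Subgroup G) := fun h => hji (Subtype.ext h)
        exact h1 (hdisjT _ (hmemT' j) _ (hmemT' i) hne _ h2 (hrepmem _ (hmemT' i)))
      · intro i j
        rw [Finset.mem_erase, Set.mem_toFinset, SetLike.mem_coe]
        rintro ⟨h1, h2⟩
        exact h1 (hdisjT _ hH0 _ (hmemT' i) (Ne.symm (hneH0 i)) _ h2 (hrepmem _ (hmemT' i)))
    · intro i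
      have hi := Finset.mem_erase.mp i.2
      exact hclique _ hi.2 _ hH0 hi.1
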